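/- Equation (H2): (x−y)(u−v) + (β−α)(x+u+v+y) + β² − α² = 0 admits the multiplicative three-leg form centered at x: (x+u+α)/(x+v+β) = (x−y+α−β)/(x−y−α+β); i.e., for x,u,v,y satisfying (H2) with all relevant denominators nonzero, this identity of fractions holds, and conversely. -/
import Mathlib


/-- Equation (H2): `(x−y)(u−v) + (β−α)(x+u+v+y) + β² − α² = 0` admits the
multiplicative three-leg form `(x+u+α)/(x+v+β) = (x−y+α−β)/(x−y−α+β)` centered
at `x`, and conversely. -/
theorem H2_three_leg_form
    (x u v y α β : ℂ)
    (h1 : x + v + β ≠ 0) (h2 : x - y - α + β ≠ 0) :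
    (x - y) * (u - v) + (β - α) * (x + u + v + y) + β ^ 2 - α ^ 2 = 0 ↔
      (x + u + α) / (x + v + β) = (x - y + α - β) / (x - y - α + β) := by
  rw [div_eq_div_iff h1 h2]
  constructor <;> intro h <;> linear_combination h
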